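/- Let Γ₀ = G_n(x_0^r x_1^{-s}) with gcd(r,s) = 1 and μ = |r^n − s^n| ≠ 0, so Γ₀ ≅ Z_μ generated by x_0, and the shift θ acts on Z_μ as multiplication by β = r(s^{n-1}a + b) where a r^n + b s = 1. Then for k ∈ Z_μ and 0 ≤ j < n: θ^j(k) = k if and only if (r^j − s^j)k ≡ 0 mod μ. In particular Fix(θ^j) is the subgroup of Z_μ of order gcd(r^n − s^n, r^j − s^j) = |r^{gcd(n,j)} − s^{gcd(n,j)}|. -/

import Mathlib

private lemma int_gcd_add_mul (a x c : ℤ) : Int.gcd a (x + c * a) = Int.gcd a x := by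
  apply Nat.dvd_antisymm
  · rw [← Int.natCast_dvd_natCast]
    apply Int.dvd_coe_gcd (Int.gcd_dvd_left _ _)
    have hx := dvd_sub (Int.gcd_dvd_right (a := a) (b := x + c * a))
      ((Int.gcd_dvd_left (a := a) (b := x + c * a)).mul_left c)
    simpa using hx
  · rw [← Int.natCast_dvd_natCast]
    apply Int.dvd_coe_gcd (Int.gcd_dvd_left _ _)
    exact dvd_add (Int.gcd_dvd_right _ _) (Dvd.dvd.mul_left (Int.gcd_dvd_left _ _) c)

private lemma gcd_sub_pow_aux (r s : ℤ) (hrs : IsCoprime r s) (m n : ℕ) :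
    Int.gcd (r ^ m - s ^ m) (r ^ n - s ^ n) =
      (r ^ Nat.gcd m n - s ^ Nat.gcd m n).natAbs := by
  induction m, n using Nat.gcd.induction with
  | H0 n => rw [pow_zero, pow_zero, sub_self, Int.gcd_zero_left, Nat.gcd_zero_left]
  | H1 m n hm ih =>
    rw [Nat.gcd_rec, ← ih, Int.gcd_comm (r ^ (n % m) - s ^ (n % m))]
    obtain ⟨c, hc⟩ := sub_dvd_pow_sub_pow (r ^ m) (s ^ m) (n / m)
    have hc' : r ^ (m * (n / m)) - s ^ (m * (n / m)) = (r ^ m - s ^ m) * c := by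
      rw [pow_mul, pow_mul]; exact hc
    have h1 : r ^ n = r ^ (m * (n / m)) * r ^ (n % m) := by
      rw [← pow_add, Nat.div_add_mod]
    have h2 : s ^ n = s ^ (m * (n / m)) * s ^ (n % m) := by
      rw [← pow_add, Nat.div_add_mod]
    have key : r ^ n - s ^ n =
        s ^ (m * (n / m)) * (r ^ (n % m) - s ^ (n % m)) +
          (c * r ^ (n % m)) * (r ^ m - s ^ m) := by
      rw [h1, h2]; linear_combination r ^ (n % m) * hc'
    have hcop : IsCoprime (s ^ (m * (n / m))) (r ^ m - s ^ m) := by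
      apply IsCoprime.pow_left
      have h0 : IsCoprime s (r ^ m) := hrs.symm.pow_right
      have h3 := h0.add_mul_left_right (-(s ^ (m - 1)))
      have h4 : s * s ^ (m - 1) = s ^ m := by
        rw [← pow_succ']; congr 1; omega
      have h5 : r ^ m + s * -s ^ (m - 1) = r ^ m - s ^ m := by
        rw [mul_neg, h4]; ring
      rwa [h5] at h3
    have hcop' : Nat.Coprime ((s ^ (m * (n / m))).natAbs) ((r ^ m - s ^ m).natAbs) :=
      Int.isCoprime_iff_gcd_eq_one.mp hcop
    rw [key, int_gcd_add_mul]
    show Nat.gcd _ _ = Nat.gcd _ _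
    rw [Int.natAbs_mul, Nat.Coprime.gcd_mul_left_cancel_right _ hcop']

private lemma card_ker (μ M : ℕ) (hμ : μ ≠ 0) :
    Nat.card {k : ZMod μ // (M : ZMod μ) * k = 0} = Nat.gcd μ M := by
  haveI : NeZero μ := ⟨hμ⟩
  set g := Nat.gcd μ M with hg
  have hgpos : 0 < g := Nat.gcd_pos_of_pos_left M (Nat.pos_of_ne_zero hμ)
  set d := μ / g with hd
  have hdg : d * g = μ := Nat.div_mul_cancel (Nat.gcd_dvd_left μ M)
  have hdpos : 0 < d :=
    Nat.pos_of_ne_zero (fun h => hμ (by simp [← hdg, h]))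
  have hk : ∀ k : ZMod μ, ((k.val : ℕ) : ZMod μ) = k := fun k => ZMod.natCast_rightInverse k
  have hcond : ∀ k : ZMod μ, ((M : ZMod μ) * k = 0 ↔ d ∣ k.val) := by
    intro k
    constructor
    · intro h
      have h1 : (((M * k.val : ℕ)) : ZMod μ) = 0 := by
        push_cast
        rw [hk k]; exact h
      have h2 : μ ∣ M * k.val := (ZMod.natCast_eq_zero_iff _ _).mp h1
      have hM : g * (M / g) = M := Nat.mul_div_cancel' (Nat.gcd_dvd_right μ M)
      have h3 : g * d ∣ g * ((M / g) * k.val) := by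
        rw [← mul_assoc, hM, mul_comm g d, hdg]; exact h2
      have h4 : d ∣ (M / g) * k.val := (mul_dvd_mul_iff_left hgpos.ne').mp h3
      have h5 : Nat.Coprime d (M / g) := Nat.coprime_div_gcd_div_gcd hgpos
      exact h5.dvd_of_dvd_mul_left h4
    · rintro ⟨w, hw⟩
      have hkk : k = ((d * w : ℕ) : ZMod μ) := by rw [← hw]; exact (hk k).symm
      rw [hkk, ← Nat.cast_mul, ZMod.natCast_eq_zero_iff]
      have hM : g * (M / g) = M := Nat.mul_div_cancel' (Nat.gcd_dvd_right μ M)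
      have hMd : M * d = μ * (M / g) := by
        calc M * d = d * g * (M / g) := by rw [mul_assoc, hM]; ring
        _ = μ * (M / g) := by rw [hdg]
      rw [← mul_assoc, hMd, mul_assoc]
      exact Dvd.intro _ rfl
  have e : {k : ZMod μ // (M : ZMod μ) * k = 0} ≃ Fin g := by
    refine ⟨fun k => ⟨k.1.val / d, ?_⟩, fun i => ⟨((d * i : ℕ) : ZMod μ), ?_⟩, ?_, ?_⟩
    · rw [Nat.div_lt_iff_lt_mul hdpos, mul_comm g d, hdg]
      exact ZMod.val_lt k.1
    · apply (hcond _).mpr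
      have hlt : d * i < μ := by
        have : (i : ℕ) < g := i.2
        calc d * i < d * g := (Nat.mul_lt_mul_left hdpos).mpr this
        _ = μ := hdg
      rw [ZMod.val_cast_of_lt hlt]
      exact dvd_mul_right d i
    · intro k
      apply Subtype.ext
      show ((d * (k.1.val / d) : ℕ) : ZMod μ) = k.1
      rw [Nat.mul_div_cancel' ((hcond k.1).mp k.2)]
      exact hk k.1
    · intro i
      apply Fin.ext
      show ((d * i : ℕ) : ZMod μ).val / d = i
      have hlt : d * i < μ := by
        have : (i : ℕ) < g := i.2
        calc d * i < d * g := (Nat.mul_lt_mul_left hdpos).mpr this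
        _ = μ := hdg
      rw [ZMod.val_cast_of_lt hlt, Nat.mul_div_cancel_left _ hdpos]
  rw [Nat.card_congr e]
  simp

/-- let `gcd(r,s) = 1`, `μ = |r^n - s^n| ≠ 0`, and `a r^n + b s = 1`,
so that `Γ₀ = G_n(x_0^r x_1^{-s}) ≅ ℤ_μ` with the shift `θ` acting as multiplication by
`β = r(s^{n-1}a + b)`.  For `k ∈ ℤ_μ` and `0 ≤ j < n`: `θ^j(k) = k` iff
`(r^j - s^j)·k ≡ 0 mod μ`; in particular `Fix(θ^j)` has order
`gcd(r^n - s^n, r^j - s^j) = |r^{(n,j)} - s^{(n,j)}|`. -/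
theorem stmt_17 (r s a b : ℤ) (n : ℕ) (hn : 1 ≤ n) (hrs : Int.gcd r s = 1)
    (hab : a * r ^ n + b * s = 1) (hμ : (r ^ n - s ^ n).natAbs ≠ 0)
    (j : ℕ) (hj : j < n) :
    (∀ k : ZMod ((r ^ n - s ^ n).natAbs),
        ((r * (s ^ (n - 1) * a + b) : ℤ) : ZMod ((r ^ n - s ^ n).natAbs)) ^ j * k = k ↔
          ((r ^ j - s ^ j : ℤ) : ZMod ((r ^ n - s ^ n).natAbs)) * k = 0) ∧
    Nat.card {k : ZMod ((r ^ n - s ^ n).natAbs) //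
        ((r * (s ^ (n - 1) * a + b) : ℤ) : ZMod ((r ^ n - s ^ n).natAbs)) ^ j * k = k} =
      Int.gcd (r ^ n - s ^ n) (r ^ j - s ^ j) ∧
    Int.gcd (r ^ n - s ^ n) (r ^ j - s ^ j) =
      (r ^ Nat.gcd n j - s ^ Nat.gcd n j).natAbs := by
  set μ := (r ^ n - s ^ n).natAbs with hμdef
  haveI : NeZero μ := ⟨hμ⟩
  have hzero : ((r ^ n - s ^ n : ℤ) : ZMod μ) = 0 := by
    rw [ZMod.intCast_zmod_eq_zero_iff_dvd]
    exact Int.natAbs_dvd.mpr dvd_rfl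
  have hsn : ((s : ZMod μ)) ^ n = ((r : ZMod μ)) ^ n := by
    push_cast at hzero
    exact (sub_eq_zero.mp hzero).symm
  set C : ZMod μ := (s : ZMod μ) ^ (n - 1) * (a : ZMod μ) + (b : ZMod μ) with hC
  have hβ : ((r * (s ^ (n - 1) * a + b) : ℤ) : ZMod μ) = (r : ZMod μ) * C := by
    rw [hC]; push_cast; ring
  have hsc : (s : ZMod μ) * C = 1 := by
    have h1 : ((a * r ^ n + b * s : ℤ) : ZMod μ) = 1 := by rw [hab]; simp
    push_cast at h1
    have hs' : (s : ZMod μ) * (s : ZMod μ) ^ (n - 1) = (s : ZMod μ) ^ n := by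
      rw [← pow_succ']; congr 1; omega
    rw [hC, mul_add, ← mul_assoc, hs', hsn]
    linear_combination h1
  have hsC : ((s : ZMod μ) * C) ^ j = 1 := by rw [hsc]; simp
  have part1 : ∀ k : ZMod μ,
      ((r * (s ^ (n - 1) * a + b) : ℤ) : ZMod μ) ^ j * k = k ↔
        ((r ^ j - s ^ j : ℤ) : ZMod μ) * k = 0 := by
    intro k
    rw [hβ]
    constructor
    · intro h
      push_cast
      rw [sub_mul, sub_eq_zero]
      have : (s : ZMod μ) ^ j * k = (r : ZMod μ) ^ j * k := by
        calc (s : ZMod μ) ^ j * k = (s : ZMod μ) ^ j * (((r : ZMod μ) * C) ^ j * k) := by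
              rw [h]
        _ = (r : ZMod μ) ^ j * (((s : ZMod μ) * C) ^ j * k) := by
              rw [mul_pow, mul_pow]; ring
        _ = (r : ZMod μ) ^ j * k := by rw [hsC, one_mul]
      exact this.symm
    · intro h
      push_cast at h
      rw [sub_mul, sub_eq_zero] at h
      calc ((r : ZMod μ) * C) ^ j * k = C ^ j * ((r : ZMod μ) ^ j * k) := by
            rw [mul_pow]; ring
      _ = C ^ j * ((s : ZMod μ) ^ j * k) := by rw [h]
      _ = ((s : ZMod μ) * C) ^ j * k := by rw [mul_pow]; ring
      _ = k := by rw [hsC, one_mul]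
  refine ⟨part1, ?_, ?_⟩
  · rw [Nat.card_congr (Equiv.subtypeEquivRight part1)]
    set M := (r ^ j - s ^ j).natAbs with hM
    have hcast : ∀ k : ZMod μ,
        (((r ^ j - s ^ j : ℤ)) : ZMod μ) * k = 0 ↔ ((M : ℕ) : ZMod μ) * k = 0 := by
      intro k
      rcases Int.natAbs_eq (r ^ j - s ^ j) with h | h
      · rw [show (((r ^ j - s ^ j : ℤ)) : ZMod μ) = ((M : ℕ) : ZMod μ) by
          rw [← hM] at h; rw [h]; push_cast; ring]
      · rw [show (((r ^ j - s ^ j : ℤ)) : ZMod μ) = -((M : ℕ) : ZMod μ) by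
          rw [← hM] at h; rw [h]; push_cast; ring]
        rw [neg_mul, neg_eq_zero]
    rw [Nat.card_congr (Equiv.subtypeEquivRight hcast), card_ker μ M hμ]
    rfl
  · exact gcd_sub_pow_aux r s (Int.isCoprime_iff_gcd_eq_one.mpr hrs) n j
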